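/- Let ‖·‖_G be a seminorm induced by a PSD bilinear form on ℝ^m, and suppose all solutions α of the constrained program minimize ‖α‖_G² subject to |⟨α, e_j⟩_G − ã_j| ≤ √(r_j) for all j. Then any two solutions α, α' satisfy ‖α − ᾱ‖_G = ‖α' − ᾱ‖_G for every fixed ᾱ with ⟨ᾱ, e_j⟩_G in the same constraint set; in fact ⟨α, e_j⟩_G = ⟨α', e_j⟩_G for all j and ‖α‖_G = ‖α'‖_G, hence ‖α − ᾱ‖_G² = ‖α'− ᾱ‖_G² whenever ‖α − α'‖_G = 0. -/

import Mathlib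

open Matrix

/-- All solutions of the constrained program have the same G-"fingerprint" and the
same risk value ‖α − ᾱ‖_G² (uniqueness-of-risk claim of Proposition 3.1). -/
theorem stmt_14 {m : ℕ} (M : Matrix (Fin m) (Fin m) ℝ) (hM : M.PosSemidef)
    (atil r : Fin m → ℝ) (hr : ∀ j, 0 ≤ r j)
    (α α' : Fin m → ℝ)
    (hfeas : ∀ j, |α ⬝ᵥ M.mulVec (Pi.single j 1) - atil j| ≤ Real.sqrt (r j))
    (hfeas' : ∀ j, |α' ⬝ᵥ M.mulVec (Pi.single j 1) - atil j| ≤ Real.sqrt (r j))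
    (hmin : ∀ β : Fin m → ℝ,
      (∀ j, |β ⬝ᵥ M.mulVec (Pi.single j 1) - atil j| ≤ Real.sqrt (r j)) →
      α ⬝ᵥ M.mulVec α ≤ β ⬝ᵥ M.mulVec β)
    (hmin' : ∀ β : Fin m → ℝ,
      (∀ j, |β ⬝ᵥ M.mulVec (Pi.single j 1) - atil j| ≤ Real.sqrt (r j)) →
      α' ⬝ᵥ M.mulVec α' ≤ β ⬝ᵥ M.mulVec β) :
    (∀ j, α ⬝ᵥ M.mulVec (Pi.single j 1) = α' ⬝ᵥ M.mulVec (Pi.single j 1)) ∧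
    α ⬝ᵥ M.mulVec α = α' ⬝ᵥ M.mulVec α' ∧
    (α - α') ⬝ᵥ M.mulVec (α - α') = 0 ∧
    (∀ ᾱ : Fin m → ℝ,
      (α - ᾱ) ⬝ᵥ M.mulVec (α - ᾱ) = (α' - ᾱ) ⬝ᵥ M.mulVec (α' - ᾱ)) := by
  -- symmetry of the form
  have hsymm : ∀ x y : Fin m → ℝ, x ⬝ᵥ M.mulVec y = y ⬝ᵥ M.mulVec x := by
    intro x y
    have hMe : Mᵀ = M := by
      have := hM.isHermitian
      simpa [Matrix.IsHermitian, Matrix.conjTranspose_eq_transpose_of_trivial] using this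
    rw [Matrix.dotProduct_mulVec, ← Matrix.mulVec_transpose, hMe, dotProduct_comm]
  -- equal objective values
  have heq : α ⬝ᵥ M.mulVec α = α' ⬝ᵥ M.mulVec α' :=
    le_antisymm (hmin α' hfeas') (hmin' α hfeas)
  -- midpoint feasible
  set β := (fun j => (α j + α' j) / 2) with hβ
  have hβeq : β = (1/2 : ℝ) • α + (1/2 : ℝ) • α' := by
    funext j; simp [hβ]; ring
  have hβdot : ∀ y : Fin m → ℝ, β ⬝ᵥ M.mulVec y
      = (α ⬝ᵥ M.mulVec y + α' ⬝ᵥ M.mulVec y) / 2 := by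
    intro y
    rw [hβeq]
    simp [add_dotProduct, smul_dotProduct]
    ring
  have hβfeas : ∀ j, |β ⬝ᵥ M.mulVec (Pi.single j 1) - atil j| ≤ Real.sqrt (r j) := by
    intro j
    rw [hβdot]
    have h1 := hfeas j
    have h2 := hfeas' j
    have : (α ⬝ᵥ M.mulVec (Pi.single j 1) + α' ⬝ᵥ M.mulVec (Pi.single j 1)) / 2 - atil j
        = ((α ⬝ᵥ M.mulVec (Pi.single j 1) - atil j) + (α' ⬝ᵥ M.mulVec (Pi.single j 1) - atil j)) / 2 := by ring
    rw [this]
    calc |((α ⬝ᵥ M.mulVec (Pi.single j 1) - atil j) + (α' ⬝ᵥ M.mulVec (Pi.single j 1) - atil j)) / 2|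
        ≤ (|α ⬝ᵥ M.mulVec (Pi.single j 1) - atil j| + |α' ⬝ᵥ M.mulVec (Pi.single j 1) - atil j|) / 2 := by
          rw [abs_div, abs_two]
          gcongr
          exact abs_add_le _ _
      _ ≤ Real.sqrt (r j) := by linarith
  have hβmin := hmin β hβfeas
  -- compute β ⬝ᵥ M β
  have hcross : β ⬝ᵥ M.mulVec β = (α ⬝ᵥ M.mulVec α + α' ⬝ᵥ M.mulVec α' + 2 * (α ⬝ᵥ M.mulVec α')) / 4 := by
    rw [hβdot]
    rw [hβeq]
    simp [Matrix.mulVec_add, Matrix.mulVec_smul, dotProduct_add, dotProduct_smul]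
    rw [hsymm α' α]
    ring
  have hle : α ⬝ᵥ M.mulVec α ≤ α ⬝ᵥ M.mulVec α' := by
    rw [hcross, heq] at hβmin
    linarith
  set d := α - α' with hd
  have hdd : d ⬝ᵥ M.mulVec d = 0 := by
    have hdd' : d ⬝ᵥ M.mulVec d = α ⬝ᵥ M.mulVec α + α' ⬝ᵥ M.mulVec α' - 2 * (α ⬝ᵥ M.mulVec α') := by
      have : d = α + (-1 : ℝ) • α' := by funext j; simp [hd]; ring
      rw [this]
      simp [Matrix.mulVec_add, Matrix.mulVec_smul, add_dotProduct, smul_dotProduct,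
        dotProduct_add, dotProduct_smul, Matrix.mulVec_neg, dotProduct_neg,
        neg_dotProduct]
      rw [hsymm α' α]
      ring
    have hnn : 0 ≤ d ⬝ᵥ M.mulVec d := by simpa using hM.dotProduct_mulVec_nonneg d
    rw [hdd'] at hnn ⊢
    rw [heq] at hle
    linarith
  have hMd : M.mulVec d = 0 := by
    have := (hM.dotProduct_mulVec_zero_iff d).mp (by simpa using hdd)
    exact this
  have hdy : ∀ y : Fin m → ℝ, d ⬝ᵥ M.mulVec y = 0 := by
    intro y
    rw [hsymm, hMd]
    simp
  have hsplit : ∀ y : Fin m → ℝ, α ⬝ᵥ M.mulVec y = α' ⬝ᵥ M.mulVec y := by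
    intro y
    have : α = α' + d := by funext j; simp [hd]
    rw [this]
    simp [add_dotProduct, hdy y]
  refine ⟨fun j => hsplit _, heq, hdd, fun ᾱ => ?_⟩
  have h1 : α - ᾱ = (α' - ᾱ) + d := by funext j; simp [hd]
  rw [h1]
  simp [add_dotProduct, Matrix.mulVec_add, dotProduct_add, hdd,
    hdy (α' - ᾱ), hsymm d (α' - ᾱ), hMd]
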